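/- Let L assign to each of the 4 vertices of the complete graph K_4 a list of at least 4 colors and to each of its 6 edges a list of at least 5 colors. Then K_4 admits an L-total-coloring: there is a choice of a color from each element's list such that adjacent vertices receive distinct colors, edges sharing an endpoint receive distinct colors, and each edge's color differs from the colors of its two endpoints. -/

import Mathlib

theorem c4_list (P Q R S : Finset ℕ) (hP : 2 ≤ P.card) (hQ : 2 ≤ Q.card)
    (hR : 2 ≤ R.card) (hS : 2 ≤ S.card) :
    ∃ p ∈ P, ∃ q ∈ Q, ∃ r ∈ R, ∃ s ∈ S, p ≠ q ∧ q ≠ r ∧ r ≠ s ∧ s ≠ p := by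
  by_cases h : (P ∩ R).Nonempty
  · obtain ⟨x, hx⟩ := h
    rw [Finset.mem_inter] at hx
    have hq : (Q \ {x}).Nonempty := by
      rw [← Finset.card_pos]
      have := Finset.le_card_sdiff ({x} : Finset ℕ) Q
      simp only [Finset.card_singleton] at this
      omega
    have hs : (S \ {x}).Nonempty := by
      rw [← Finset.card_pos]
      have := Finset.le_card_sdiff ({x} : Finset ℕ) S
      simp only [Finset.card_singleton] at this
      omega
    obtain ⟨q, hq⟩ := hq
    obtain ⟨s, hs⟩ := hs
    rw [Finset.mem_sdiff, Finset.mem_singleton] at hq hs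
    exact ⟨x, hx.1, q, hq.1, x, hx.2, s, hs.1,
      fun h => hq.2 h.symm, hq.2, fun h => hs.2 h.symm, hs.2⟩
  · rw [Finset.not_nonempty_iff_eq_empty] at h
    have hdisj : ∀ y, y ∈ P → y ∉ R := by
      intro y hy hy'
      have : y ∈ P ∩ R := Finset.mem_inter.mpr ⟨hy, hy'⟩
      simp [h] at this
    obtain ⟨q1, hq1, q2, hq2, hqq⟩ := Finset.one_lt_card.mp (by omega : 1 < Q.card)
    obtain ⟨s1, hs1, s2, hs2, hss⟩ := Finset.one_lt_card.mp (by omega : 1 < S.card)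
    have key : ∃ q ∈ Q, ∃ s ∈ S, P ≠ ({q, s} : Finset ℕ) ∧ R ≠ ({q, s} : Finset ℕ) := by
      by_cases h1 : P = ({q1, s1} : Finset ℕ) ∨ R = ({q1, s1} : Finset ℕ)
      · by_cases h2 : P = ({q1, s2} : Finset ℕ) ∨ R = ({q1, s2} : Finset ℕ)
        · exfalso
          have hne : ({q1, s1} : Finset ℕ) ≠ ({q1, s2} : Finset ℕ) := by
            intro he
            have h1' : s2 ∈ ({q1, s1} : Finset ℕ) := by rw [he]; simp
            have h2' : s1 ∈ ({q1, s2} : Finset ℕ) := by rw [← he]; simp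
            simp at h1' h2'
            rcases h1' with h1' | h1'
            · rcases h2' with h2' | h2' <;> omega
            · omega
          rcases h1 with h1 | h1 <;> rcases h2 with h2 | h2
          · exact hne (h1 ▸ h2 ▸ rfl)
          · exact hdisj q1 (by rw [h1]; simp) (by rw [h2]; simp)
          · exact hdisj q1 (by rw [h2]; simp) (by rw [h1]; simp)
          · exact hne (h1 ▸ h2 ▸ rfl)
        · push_neg at h2
          exact ⟨q1, hq1, s2, hs2, h2.1, h2.2⟩
      · push_neg at h1
        exact ⟨q1, hq1, s1, hs1, h1.1, h1.2⟩
    obtain ⟨q, hq, s, hs, hP1, hR1⟩ := key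
    have hcard2 : ({q, s} : Finset ℕ).card ≤ 2 := by
      apply (Finset.card_insert_le _ _).trans; simp
    have hp : (P \ {q, s}).Nonempty := by
      rw [Finset.sdiff_nonempty]
      intro hsub
      exact hP1 (Finset.eq_of_subset_of_card_le hsub (by omega))
    have hr : (R \ {q, s}).Nonempty := by
      rw [Finset.sdiff_nonempty]
      intro hsub
      exact hR1 (Finset.eq_of_subset_of_card_le hsub (by omega))
    obtain ⟨p, hp⟩ := hp
    obtain ⟨r, hr⟩ := hr
    rw [Finset.mem_sdiff, Finset.mem_insert, Finset.mem_singleton] at hp hr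
    push_neg at hp hr
    exact ⟨p, hp.1, q, hq, r, hr.1, s, hs,
      hp.2.1, fun h => hr.2.1 h.symm, hr.2.2, fun h => hp.2.2 h.symm⟩

/-- helper: if the X-pair lists intersect, we can finish via the C4 lemma. -/
theorem octa_pair (X1 X2 Y1 Y2 Z1 Z2 : Finset ℕ)
    (hY1 : 3 ≤ Y1.card) (hY2 : 3 ≤ Y2.card) (hZ1 : 3 ≤ Z1.card) (hZ2 : 3 ≤ Z2.card)
    (hx : (X1 ∩ X2).Nonempty) :
    ∃ x1 ∈ X1, ∃ x2 ∈ X2, ∃ y1 ∈ Y1, ∃ y2 ∈ Y2, ∃ z1 ∈ Z1, ∃ z2 ∈ Z2,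
      x1 ≠ y1 ∧ x1 ≠ y2 ∧ x2 ≠ y1 ∧ x2 ≠ y2 ∧
      x1 ≠ z1 ∧ x1 ≠ z2 ∧ x2 ≠ z1 ∧ x2 ≠ z2 ∧
      y1 ≠ z1 ∧ y1 ≠ z2 ∧ y2 ≠ z1 ∧ y2 ≠ z2 := by
  obtain ⟨x, hx⟩ := hx
  rw [Finset.mem_inter] at hx
  have hcard : ∀ W : Finset ℕ, 3 ≤ W.card → 2 ≤ (W \ {x}).card := by
    intro W hW
    have := Finset.le_card_sdiff ({x} : Finset ℕ) W
    simp only [Finset.card_singleton] at this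
    omega
  obtain ⟨y1, hy1, z1, hz1, y2, hy2, z2, hz2, h1, h2, h3, h4⟩ :=
    c4_list (Y1 \ {x}) (Z1 \ {x}) (Y2 \ {x}) (Z2 \ {x})
      (hcard _ hY1) (hcard _ hZ1) (hcard _ hY2) (hcard _ hZ2)
  rw [Finset.mem_sdiff, Finset.mem_singleton] at hy1 hy2 hz1 hz2
  exact ⟨x, hx.1, x, hx.2, y1, hy1.1, y2, hy2.1, z1, hz1.1, z2, hz2.1,
    fun h => hy1.2 h.symm, fun h => hy2.2 h.symm, fun h => hy1.2 h.symm, fun h => hy2.2 h.symm,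
    fun h => hz1.2 h.symm, fun h => hz2.2 h.symm, fun h => hz1.2 h.symm, fun h => hz2.2 h.symm,
    h1, fun h => h4 h.symm, fun h => h2 h.symm, h3⟩

theorem octa (A1 A2 B1 B2 C1 C2 : Finset ℕ)
    (hA1 : 3 ≤ A1.card) (hA2 : 3 ≤ A2.card) (hB1 : 3 ≤ B1.card)
    (hB2 : 3 ≤ B2.card) (hC1 : 3 ≤ C1.card) (hC2 : 3 ≤ C2.card) :
    ∃ a1 ∈ A1, ∃ a2 ∈ A2, ∃ b1 ∈ B1, ∃ b2 ∈ B2, ∃ c1 ∈ C1, ∃ c2 ∈ C2,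
      a1 ≠ b1 ∧ a1 ≠ b2 ∧ a2 ≠ b1 ∧ a2 ≠ b2 ∧
      a1 ≠ c1 ∧ a1 ≠ c2 ∧ a2 ≠ c1 ∧ a2 ≠ c2 ∧
      b1 ≠ c1 ∧ b1 ≠ c2 ∧ b2 ≠ c1 ∧ b2 ≠ c2 := by
  by_cases hA : (A1 ∩ A2).Nonempty
  · exact octa_pair A1 A2 B1 B2 C1 C2 hB1 hB2 hC1 hC2 hA
  by_cases hB : (B1 ∩ B2).Nonempty
  · obtain ⟨b1, h1, b2, h2, a1, h3, a2, h4, c1, h5, c2, h6, d⟩ :=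
      octa_pair B1 B2 A1 A2 C1 C2 hA1 hA2 hC1 hC2 hB
    exact ⟨a1, h3, a2, h4, b1, h1, b2, h2, c1, h5, c2, h6,
      d.1.symm, d.2.2.1.symm, d.2.1.symm, d.2.2.2.1.symm,
      d.2.2.2.2.2.2.2.2.1, d.2.2.2.2.2.2.2.2.2.1, d.2.2.2.2.2.2.2.2.2.2.1, d.2.2.2.2.2.2.2.2.2.2.2,
      d.2.2.2.2.1, d.2.2.2.2.2.1, d.2.2.2.2.2.2.1, d.2.2.2.2.2.2.2.1⟩
  by_cases hC : (C1 ∩ C2).Nonempty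
  · obtain ⟨c1, h1, c2, h2, a1, h3, a2, h4, b1, h5, b2, h6, d⟩ :=
      octa_pair C1 C2 A1 A2 B1 B2 hA1 hA2 hB1 hB2 hC
    exact ⟨a1, h3, a2, h4, b1, h5, b2, h6, c1, h1, c2, h2,
      d.2.2.2.2.2.2.2.2.1, d.2.2.2.2.2.2.2.2.2.1, d.2.2.2.2.2.2.2.2.2.2.1, d.2.2.2.2.2.2.2.2.2.2.2,
      d.1.symm, d.2.2.1.symm, d.2.1.symm, d.2.2.2.1.symm,
      d.2.2.2.2.1.symm, d.2.2.2.2.2.2.1.symm, d.2.2.2.2.2.1.symm, d.2.2.2.2.2.2.2.1.symm⟩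
  -- Hall case: all three pairs are disjoint, find an SDR
  rw [Finset.not_nonempty_iff_eq_empty] at hA hB hC
  set t : Fin 6 → Finset ℕ := ![A1, A2, B1, B2, C1, C2] with ht
  have hcards : ∀ i : Fin 6, 3 ≤ (t i).card := by
    intro i
    fin_cases i <;> simpa [ht] using (by assumption)
  have hall : ∀ s : Finset (Fin 6), s.card ≤ (s.biUnion t).card := by
    intro s
    rcases Nat.lt_or_ge s.card 4 with hs | hs
    · rcases Finset.eq_empty_or_nonempty s with rfl | ⟨i, hi⟩
      · simp
      · have hsub : t i ⊆ s.biUnion t := Finset.subset_biUnion_of_mem t hi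
        have := Finset.card_le_card hsub
        have := hcards i
        omega
    · obtain ⟨i, hi, j, hj, hij, hfij⟩ :=
        Finset.exists_ne_map_eq_of_card_lt_of_maps_to (s := s)
          (t := (Finset.univ : Finset (Fin 3)))
          (f := fun a : Fin 6 => (⟨a.1 / 2, by have := a.2; omega⟩ : Fin 3))
          (by simp; omega) (fun a _ => Finset.mem_univ _)
      have hdisj : t i ∩ t j = ∅ := by
        have hij' : (i : ℕ) / 2 = (j : ℕ) / 2 := by
          simpa [Fin.ext_iff] using hfij
        have e0 : t 0 = A1 := by simp [ht]
        have e1 : t 1 = A2 := by simp [ht]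
        have e2 : t 2 = B1 := by simp [ht]
        have e3 : t 3 = B2 := by simp [ht]
        have e4 : t 4 = C1 := by simp [ht]
        have e5 : t 5 = C2 := by rw [ht]; rfl
        fin_cases i <;> fin_cases j <;>
          simp_all [e0, e1, e2, e3, e4, e5] <;>
          (rw [Finset.inter_comm]; assumption)
      have hsub : t i ∪ t j ⊆ s.biUnion t :=
        Finset.union_subset (Finset.subset_biUnion_of_mem t hi)
          (Finset.subset_biUnion_of_mem t hj)
      have hcard : (t i ∪ t j).card = (t i).card + (t j).card := by
        rw [Finset.card_union_of_disjoint (Finset.disjoint_iff_inter_eq_empty.mpr hdisj)]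
      have h1 := Finset.card_le_card hsub
      have h2 := hcards i
      have h3 := hcards j
      have h4 : s.card ≤ 6 := by
        have := Finset.card_le_univ s
        simpa using this
      omega
  obtain ⟨f, hfinj, hfmem⟩ := (Finset.all_card_le_biUnion_card_iff_exists_injective t).mp hall
  have d : ∀ i j : Fin 6, i ≠ j → f i ≠ f j := fun i j hij h => hij (hfinj h)
  refine ⟨f 0, by simpa [ht] using hfmem 0, f 1, by simpa [ht] using hfmem 1,
    f 2, by simpa [ht] using hfmem 2, f 3, by simpa [ht] using hfmem 3,
    f 4, by simpa [ht] using hfmem 4, f 5, by simpa [ht] using hfmem 5,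
    d 0 2 (by decide), d 0 3 (by decide), d 1 2 (by decide), d 1 3 (by decide),
    d 0 4 (by decide), d 0 5 (by decide), d 1 4 (by decide), d 1 5 (by decide),
    d 2 4 (by decide), d 2 5 (by decide), d 3 4 (by decide), d 3 5 (by decide)⟩


/-- The complete graph `K_4` admits an `L`-total-coloring whenever
`L` gives each vertex a list of at least 4 colors and each edge a list of at
least 5 colors. -/
theorem K4_total_choosable
    (Lv : Fin 4 → Finset ℕ) (Le : Sym2 (Fin 4) → Finset ℕ)
    (hLv : ∀ v : Fin 4, 4 ≤ (Lv v).card)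
    (hLe : ∀ e ∈ (SimpleGraph.completeGraph (Fin 4)).edgeSet, 5 ≤ (Le e).card) :
    ∃ (cv : Fin 4 → ℕ) (ce : Sym2 (Fin 4) → ℕ),
      (∀ v : Fin 4, cv v ∈ Lv v) ∧
      (∀ e ∈ (SimpleGraph.completeGraph (Fin 4)).edgeSet, ce e ∈ Le e) ∧
      (∀ u w : Fin 4, (SimpleGraph.completeGraph (Fin 4)).Adj u w → cv u ≠ cv w) ∧
      (∀ e ∈ (SimpleGraph.completeGraph (Fin 4)).edgeSet, ∀ f ∈ (SimpleGraph.completeGraph (Fin 4)).edgeSet,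
        e ≠ f → (∃ x : Fin 4, x ∈ e ∧ x ∈ f) → ce e ≠ ce f) ∧
      (∀ v : Fin 4, ∀ e ∈ (SimpleGraph.completeGraph (Fin 4)).edgeSet, v ∈ e → cv v ≠ ce e) := by
  classical
  -- membership of edges in the edge set of the complete graph
  have hmem : ∀ u v : Fin 4, u ≠ v → s(u, v) ∈ (SimpleGraph.completeGraph (Fin 4)).edgeSet := by
    intro u v h
    simp [SimpleGraph.completeGraph, h]
  -- choose distinct vertex colors greedily
  obtain ⟨a0, ha0⟩ : (Lv 0).Nonempty := Finset.card_pos.mp (by have := hLv 0; omega)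
  obtain ⟨a1, ha1⟩ : (Lv 1 \ {a0}).Nonempty := by
    rw [← Finset.card_pos]
    have := Finset.le_card_sdiff ({a0} : Finset ℕ) (Lv 1)
    have := hLv 1
    simp only [Finset.card_singleton] at *
    omega
  obtain ⟨a2, ha2⟩ : ((Lv 2 \ {a0}) \ {a1}).Nonempty := by
    rw [← Finset.card_pos]
    have h1 := Finset.le_card_sdiff ({a0} : Finset ℕ) (Lv 2)
    have h2 := Finset.le_card_sdiff ({a1} : Finset ℕ) (Lv 2 \ {a0})
    have := hLv 2
    simp only [Finset.card_singleton] at *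
    omega
  obtain ⟨a3, ha3⟩ : (((Lv 3 \ {a0}) \ {a1}) \ {a2}).Nonempty := by
    rw [← Finset.card_pos]
    have h1 := Finset.le_card_sdiff ({a0} : Finset ℕ) (Lv 3)
    have h2 := Finset.le_card_sdiff ({a1} : Finset ℕ) (Lv 3 \ {a0})
    have h3 := Finset.le_card_sdiff ({a2} : Finset ℕ) ((Lv 3 \ {a0}) \ {a1})
    have := hLv 3
    simp only [Finset.card_singleton] at *
    omega
  rw [Finset.mem_sdiff, Finset.mem_singleton] at ha1
  rw [Finset.mem_sdiff, Finset.mem_sdiff, Finset.mem_singleton, Finset.mem_singleton] at ha2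
  rw [Finset.mem_sdiff, Finset.mem_sdiff, Finset.mem_sdiff,
    Finset.mem_singleton, Finset.mem_singleton, Finset.mem_singleton] at ha3
  obtain ⟨ha1, hd10⟩ := ha1
  obtain ⟨⟨ha2, hd20⟩, hd21⟩ := ha2
  obtain ⟨⟨⟨ha3, hd30⟩, hd31⟩, hd32⟩ := ha3
  -- reduced edge lists
  have hredcard : ∀ (u v : Fin 4) (x y : ℕ), u ≠ v → 3 ≤ ((Le s(u, v) \ {x}) \ {y}).card := by
    intro u v x y huv
    have h1 := Finset.le_card_sdiff ({x} : Finset ℕ) (Le s(u, v))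
    have h2 := Finset.le_card_sdiff ({y} : Finset ℕ) (Le s(u, v) \ {x})
    have h3 := hLe _ (hmem u v huv)
    simp only [Finset.card_singleton] at *
    omega
  obtain ⟨x01, hx01, x23, hx23, x02, hx02, x13, hx13, x03, hx03, x12, hx12,
      d1, d2, d3, d4, d5, d6, d7, d8, d9, d10, d11, d12⟩ :=
    octa ((Le s(0, 1) \ {a0}) \ {a1}) ((Le s(2, 3) \ {a2}) \ {a3})
      ((Le s(0, 2) \ {a0}) \ {a2}) ((Le s(1, 3) \ {a1}) \ {a3})
      ((Le s(0, 3) \ {a0}) \ {a3}) ((Le s(1, 2) \ {a1}) \ {a2})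
      (hredcard 0 1 _ _ (by decide)) (hredcard 2 3 _ _ (by decide))
      (hredcard 0 2 _ _ (by decide)) (hredcard 1 3 _ _ (by decide))
      (hredcard 0 3 _ _ (by decide)) (hredcard 1 2 _ _ (by decide))
  rw [Finset.mem_sdiff, Finset.mem_sdiff, Finset.mem_singleton, Finset.mem_singleton]
    at hx01 hx23 hx02 hx13 hx03 hx12
  obtain ⟨⟨hx01, e010⟩, e011⟩ := hx01
  obtain ⟨⟨hx23, e232⟩, e233⟩ := hx23
  obtain ⟨⟨hx02, e020⟩, e022⟩ := hx02
  obtain ⟨⟨hx13, e131⟩, e133⟩ := hx13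
  obtain ⟨⟨hx03, e030⟩, e033⟩ := hx03
  obtain ⟨⟨hx12, e121⟩, e122⟩ := hx12
  set cv : Fin 4 → ℕ := fun v => if v = 0 then a0 else if v = 1 then a1 else if v = 2 then a2 else a3 with hcv
  set ce : Sym2 (Fin 4) → ℕ := fun e =>
    if e = s(0, 1) then x01 else if e = s(0, 2) then x02 else if e = s(0, 3) then x03
    else if e = s(1, 2) then x12 else if e = s(1, 3) then x13 else x23 with hce
  have cv0 : cv 0 = a0 := by simp [hcv]
  have cv1 : cv 1 = a1 := by simp [hcv]
  have cv2 : cv 2 = a2 := by simp [hcv]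
  have cv3 : cv 3 = a3 := by simp [hcv]
  have ce01 : ce s(0, 1) = x01 := by simp [hce]
  have ce02 : ce s(0, 2) = x02 := by simp [hce]
  have ce03 : ce s(0, 3) = x03 := by simp [hce]
  have ce12 : ce s(1, 2) = x12 := by simp [hce]
  have ce13 : ce s(1, 3) = x13 := by simp [hce]
  have ce23 : ce s(2, 3) = x23 := by simp [hce]
  -- symmetric copies of the disequalities
  have d1' := d1.symm; have d2' := d2.symm; have d3' := d3.symm; have d4' := d4.symm
  have d5' := d5.symm; have d6' := d6.symm; have d7' := d7.symm; have d8' := d8.symm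
  have d9' := d9.symm; have d10' := d10.symm; have d11' := d11.symm; have d12' := d12.symm
  have e010' := Ne.symm e010; have e011' := Ne.symm e011
  have e232' := Ne.symm e232; have e233' := Ne.symm e233
  have e020' := Ne.symm e020; have e022' := Ne.symm e022
  have e131' := Ne.symm e131; have e133' := Ne.symm e133
  have e030' := Ne.symm e030; have e033' := Ne.symm e033
  have e121' := Ne.symm e121; have e122' := Ne.symm e122
  have hd01 := Ne.symm hd10; have hd02 := Ne.symm hd20; have hd03 := Ne.symm hd30
  have hd12 := Ne.symm hd21; have hd13 := Ne.symm hd31; have hd23 := Ne.symm hd32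
  -- edge color membership in both orientations
  have m01 : ce s(0, 1) ∈ Le s(0, 1) := by rw [ce01]; exact hx01
  have m02 : ce s(0, 2) ∈ Le s(0, 2) := by rw [ce02]; exact hx02
  have m03 : ce s(0, 3) ∈ Le s(0, 3) := by rw [ce03]; exact hx03
  have m12 : ce s(1, 2) ∈ Le s(1, 2) := by rw [ce12]; exact hx12
  have m13 : ce s(1, 3) ∈ Le s(1, 3) := by rw [ce13]; exact hx13
  have m23 : ce s(2, 3) ∈ Le s(2, 3) := by rw [ce23]; exact hx23
  have ce10 : ce s(1, 0) = x01 := by rw [Sym2.eq_swap]; exact ce01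
  have ce20 : ce s(2, 0) = x02 := by rw [Sym2.eq_swap]; exact ce02
  have ce30 : ce s(3, 0) = x03 := by rw [Sym2.eq_swap]; exact ce03
  have ce21 : ce s(2, 1) = x12 := by rw [Sym2.eq_swap]; exact ce12
  have ce31 : ce s(3, 1) = x13 := by rw [Sym2.eq_swap]; exact ce13
  have ce32 : ce s(3, 2) = x23 := by rw [Sym2.eq_swap]; exact ce23
  have m10 : ce s(1, 0) ∈ Le s(1, 0) := by rw [Sym2.eq_swap]; exact m01
  have m20 : ce s(2, 0) ∈ Le s(2, 0) := by rw [Sym2.eq_swap]; exact m02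
  have m30 : ce s(3, 0) ∈ Le s(3, 0) := by rw [Sym2.eq_swap]; exact m03
  have m21 : ce s(2, 1) ∈ Le s(2, 1) := by rw [Sym2.eq_swap]; exact m12
  have m31 : ce s(3, 1) ∈ Le s(3, 1) := by rw [Sym2.eq_swap]; exact m13
  have m32 : ce s(3, 2) ∈ Le s(3, 2) := by rw [Sym2.eq_swap]; exact m23
  refine ⟨cv, ce, ?_, ?_, ?_, ?_, ?_⟩
  · intro v
    fin_cases v
    · simpa [cv0] using ha0
    · simpa [cv1] using ha1
    · simpa [cv2] using ha2
    · simpa [cv3] using ha3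
  · intro e
    induction e using Sym2.ind with
    | _ u v =>
      intro he
      have huv : u ≠ v := by simpa [SimpleGraph.completeGraph] using he
      fin_cases u <;> fin_cases v <;>
        first
          | exact absurd rfl huv
          | exact m01 | exact m02 | exact m03 | exact m12 | exact m13 | exact m23
          | exact m10 | exact m20 | exact m30 | exact m21 | exact m31 | exact m32
  · intro u w h
    have huw : u ≠ w := by simpa [SimpleGraph.completeGraph] using h
    fin_cases u <;> fin_cases w <;>
      first
        | exact absurd rfl huw
        | (simp only [cv0, cv1, cv2, cv3]; assumption)
  · intro e
    induction e using Sym2.ind with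
    | _ u v =>
      intro he f
      induction f using Sym2.ind with
      | _ u' v' =>
        intro hf hne hsh
        have huv : u ≠ v := by simpa [SimpleGraph.completeGraph] using he
        have hu'v' : u' ≠ v' := by simpa [SimpleGraph.completeGraph] using hf
        fin_cases u <;> fin_cases v <;> fin_cases u' <;> fin_cases v' <;>
          first
            | exact absurd rfl huv
            | exact absurd rfl hu'v'
            | exact absurd rfl hne
            | exact absurd Sym2.eq_swap hne
            | exact absurd hsh (by decide)
            | (simp only [ce01, ce02, ce03, ce12, ce13, ce23,
                ce10, ce20, ce30, ce21, ce31, ce32]; assumption)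
  · intro v e
    induction e using Sym2.ind with
    | _ u w =>
      intro he hve
      have huw : u ≠ w := by simpa [SimpleGraph.completeGraph] using he
      fin_cases v <;> fin_cases u <;> fin_cases w <;>
        first
          | exact absurd rfl huw
          | exact absurd hve (by decide)
          | (simp only [cv0, cv1, cv2, cv3, ce01, ce02, ce03, ce12, ce13, ce23,
              ce10, ce20, ce30, ce21, ce31, ce32]; assumption)
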